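/- Suppose A ⊂ ℤ≥0 is finite with 0 ∈ A, N = #A ≥ 2, the polynomial A(x) = Σ_{a∈A} x^a is irreducible over ℚ, and A tiles ℤ by translations. Then N is prime, A(x) = Φ_{N^α}(x) for some α ≥ 1, and A = {0, N^{α-1}, 2N^{α-1}, ..., (N-1)N^{α-1}}. -/

import Mathlib

open Polynomial

lemma tile_exists_root (A : Finset ℕ) (h0A : 0 ∈ A) (N : ℕ) (hN : N = A.card) (hN2 : 2 ≤ N)
    (B : Set ℤ)
    (hB : ∀ n : ℤ, ∃! ab : ℕ × ℤ, ab.1 ∈ A ∧ ab.2 ∈ B ∧ n = (ab.1 : ℤ) + ab.2) :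
    ∃ ζ : ℂ, ζ ≠ 1 ∧ (∃ M : ℕ, 0 < M ∧ ζ ^ M = 1) ∧ (∑ a ∈ A, ζ ^ a) = 0 := by
  classical
  set D : ℕ := A.max' ⟨0, h0A⟩ with hDdef
  have hD : ∀ a ∈ A, a ≤ D := fun a ha => A.le_max' a ha
  have hDA : D ∈ A := A.max'_mem _
  -- representation function
  choose r hr using fun n => (hB n).exists
  have uniq : ∀ (n : ℤ) (p : ℕ × ℤ),
      (p.1 ∈ A ∧ p.2 ∈ B ∧ n = (p.1 : ℤ) + p.2) → p = r n :=
    fun n p hp => (hB n).unique hp (hr n)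
  -- membership characterization
  have hchar : ∀ m : ℤ, m ∈ B ↔ ∀ a ∈ A, a ≠ 0 → m - (a : ℤ) ∉ B := by
    intro m
    constructor
    · intro hm a ha ha0 hcontra
      have h1 := uniq m (a, m - a) ⟨ha, hcontra, by ring⟩
      have h2 := uniq m (0, m) ⟨h0A, hm, by simp⟩
      rw [← h2] at h1
      have : a = 0 := by
        have := congrArg Prod.fst h1
        simpa using this
      exact ha0 this
    · intro h
      obtain ⟨ha, hb, he⟩ := hr m
      by_cases h0 : (r m).1 = 0
      · have : (r m).2 = m := by omega
        rwa [← this]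
      · exact absurd (show m - ((r m).1 : ℤ) ∈ B by
          have : m - ((r m).1 : ℤ) = (r m).2 := by omega
          rwa [this]) (h _ ha h0)
  -- pigeonhole on states
  obtain ⟨x, y, hxy, hstxy⟩ : ∃ x y : ℕ, x < y ∧
      (fun t : ℕ => {i : Fin (D+1) | ((t : ℤ) + (i : ℕ) ∈ B)}) x
        = (fun t : ℕ => {i : Fin (D+1) | ((t : ℤ) + (i : ℕ) ∈ B)}) y := by
    obtain ⟨u, v, huv, h⟩ := Finite.exists_ne_map_eq_of_infinite
      (fun t : ℕ => {i : Fin (D+1) | ((t : ℤ) + (i : ℕ) ∈ B)})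
    rcases huv.lt_or_gt with h' | h'
    · exact ⟨u, v, h', h⟩
    · exact ⟨v, u, h', h.symm⟩
  simp only at hstxy
  set M : ℕ := y - x with hMdef
  have hM : 0 < M := by omega
  have hyx : (y : ℤ) = (x : ℤ) + M := by omega
  -- propagation
  have hprop : ∀ n : ℕ, (((x:ℤ) + n ∈ B) ↔ ((y:ℤ) + n ∈ B)) := by
    intro n
    induction n using Nat.strong_induction_on with
    | _ n ih =>
      by_cases hn : n ≤ D
      · have := Set.ext_iff.mp hstxy ⟨n, by omega⟩
        simpa using this
      · push_neg at hn
        rw [hchar ((x:ℤ)+n), hchar ((y:ℤ)+n)]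
        have key : ∀ a ∈ A, a ≠ 0 →
            ((((x:ℤ)+n) - a ∈ B) ↔ (((y:ℤ)+n) - a ∈ B)) := by
          intro a ha ha0
          have haD : a ≤ D := hD a ha
          have h1 : ((x:ℤ)+n) - a = (x:ℤ) + ((n - a : ℕ) : ℤ) := by omega
          have h2 : ((y:ℤ)+n) - a = (y:ℤ) + ((n - a : ℕ) : ℤ) := by omega
          rw [h1, h2]
          exact ih (n - a) (by omega)
        constructor
        · intro H a ha h0 hb
          exact H a ha h0 ((key a ha h0).mpr hb)
        · intro H a ha h0 hb
          exact H a ha h0 ((key a ha h0).mp hb)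
  -- one-period shift
  have hper1 : ∀ b : ℤ, (x:ℤ) ≤ b → (b ∈ B ↔ b + M ∈ B) := by
    intro b hb
    have h1 : (x:ℤ) + ((b - x).toNat : ℤ) = b := by omega
    have h2 : (y:ℤ) + ((b - x).toNat : ℤ) = b + M := by omega
    have := hprop (b - x).toNat
    rw [h1, h2] at this
    exact this
  have hperk : ∀ (b : ℤ), (x:ℤ) ≤ b → ∀ k : ℕ, (b ∈ B ↔ b + (M:ℤ) * k ∈ B) := by
    intro b hb k
    induction k with
    | zero => simp
    | succ k ih =>
      have hbk : (x:ℤ) ≤ b + (M:ℤ) * k :=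
        le_trans hb (le_add_of_nonneg_right (by positivity))
      have hstep := hper1 (b + (M:ℤ)*k) hbk
      have e : b + (M:ℤ)*((k:ℕ)+1 : ℕ) = (b + (M:ℤ)*k) + M := by push_cast; ring
      rw [e]
      exact ih.trans hstep
  -- periodicity along divisibility
  have half : ∀ b c : ℤ, (x:ℤ) ≤ b → b ≤ c → (M:ℤ) ∣ (c - b) → (b ∈ B ↔ c ∈ B) := by
    intro b c hb hbc ⟨q, hq⟩
    have hq0 : 0 ≤ q := by
      by_contra hq0
      push_neg at hq0
      have : (M:ℤ) * q < 0 := mul_neg_of_pos_of_neg (by exact_mod_cast hM) hq0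
      omega
    have hqe : q = (q.toNat : ℤ) := (Int.toNat_of_nonneg hq0).symm
    have : c = b + (M:ℤ) * (q.toNat : ℕ) := by rw [← hqe]; omega
    rw [this]
    exact hperk b hb q.toNat
  have hperdvd : ∀ b c : ℤ, (x:ℤ) ≤ b → (x:ℤ) ≤ c → (M:ℤ) ∣ (c - b) → (b ∈ B ↔ c ∈ B) := by
    intro b c hb hc hdvd
    rcases le_total b c with h | h
    · exact half b c hb h hdvd
    · refine (half c b hc h ?_).symm
      obtain ⟨q, hq⟩ := hdvd
      exact ⟨-q, by linarith⟩
  set T : ℤ := (x:ℤ) with hT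
  set B0 : Finset ℤ := (Finset.Ico T (T + M)).filter (· ∈ B) with hB0
  have hmemB0 : ∀ b : ℤ, b ∈ B0 ↔ (T ≤ b ∧ b < T + M) ∧ b ∈ B := by
    intro b
    simp [hB0, Finset.mem_filter, Finset.mem_Ico, and_assoc]
  have hMz : (0:ℤ) < (M:ℤ) := by exact_mod_cast hM
  have hred : ∀ z : ℤ, (M:ℤ) ∣ (z - z % (M:ℤ)) :=
    fun z => ⟨z / M, by have := Int.emod_add_mul_ediv z M; linarith⟩
  have hmod_nonneg : ∀ z : ℤ, 0 ≤ z % (M:ℤ) := fun z => Int.emod_nonneg z (by omega)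
  have hmod_lt : ∀ z : ℤ, z % (M:ℤ) < M := fun z => Int.emod_lt_of_pos z hMz
  have hemod_eq : ∀ z : ℤ, 0 ≤ z → z < M → z % (M:ℤ) = z :=
    fun z h1 h2 => Int.emod_eq_of_lt h1 h2
  have hsubmul : ∀ a c : ℤ, (a - (M:ℤ) * c) % (M:ℤ) = a % (M:ℤ) := by
    intro a c
    have h : a - (M:ℤ)*c = a + (M:ℤ)*(-c) := by ring
    rw [h, Int.add_mul_emod_self_left]
  have key : ∀ ζ : ℂ, ζ ^ (M:ℕ) = 1 →
      (∑ a ∈ A, ζ ^ (a:ℤ)) * (∑ b ∈ B0, ζ ^ b)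
        = ∑ n ∈ Finset.Ico (T + D) (T + D + M), ζ ^ n := by
    intro ζ hζ
    have hζ0 : ζ ≠ 0 := by
      intro h; rw [h, zero_pow hM.ne'] at hζ; exact zero_ne_one hζ
    have hzM : ζ ^ ((M:ℕ):ℤ) = 1 := by rw [zpow_natCast]; exact hζ
    have hcong : ∀ s t : ℤ, (M:ℤ) ∣ (s - t) → ζ ^ s = ζ ^ t := by
      rintro s t ⟨q, hq⟩
      have hst : s = t + ((M:ℕ):ℤ) * q := by linarith
      rw [hst, zpow_add₀ hζ0, zpow_mul, hzM, one_zpow, mul_one]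
    rw [Finset.sum_mul_sum, ← Finset.sum_product']
    refine Finset.sum_bij'
      (fun p _ => T + D + (((p.1:ℤ) + p.2 - (T + D)) % (M:ℤ)))
      (fun n _ => ((r n).1, T + (((r n).2 - T) % (M:ℤ)))) ?_ ?_ ?_ ?_ ?_
    · intro p hp
      rw [Finset.mem_Ico]
      constructor
      · have := hmod_nonneg ((p.1:ℤ) + p.2 - (T + D)); linarith
      · have := hmod_lt ((p.1:ℤ) + p.2 - (T + D)); linarith
    · intro n hn
      rw [Finset.mem_Ico] at hn
      rw [Finset.mem_product]
      obtain ⟨ha, hbB, he⟩ := hr n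
      have haD : ((r n).1 : ℤ) ≤ D := by exact_mod_cast hD _ ha
      have hrbT : T ≤ (r n).2 := by omega
      refine ⟨ha, ?_⟩
      dsimp only
      rw [hmemB0]
      refine ⟨⟨by have := hmod_nonneg ((r n).2 - T); linarith,
        by have := hmod_lt ((r n).2 - T); linarith⟩, ?_⟩
      obtain ⟨q, hq⟩ := hred ((r n).2 - T)
      refine (hperdvd (T + ((r n).2 - T) % (M:ℤ)) (r n).2 ?_ ?_ ?_).mpr hbB
      · have := hmod_nonneg ((r n).2 - T); omega
      · omega
      · exact ⟨q, by linarith⟩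
    · -- left inverse
      rintro ⟨a, b⟩ hp
      dsimp only
      rw [Finset.mem_product] at hp
      obtain ⟨ha, hb⟩ := hp
      rw [hmemB0] at hb
      obtain ⟨⟨hb1, hb2⟩, hbB⟩ := hb
      have haD : (a:ℤ) ≤ D := by exact_mod_cast hD a ha
      set z : ℤ := (a:ℤ) + b - (T + D) with hz
      set n : ℤ := T + D + z % (M:ℤ) with hn
      obtain ⟨q, hq⟩ := hred z
      have hbB' : n - (a:ℤ) ∈ B := by
        refine (hperdvd b (n - (a:ℤ)) ?_ ?_ ?_).mp hbB
        · omega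
        · have := hmod_nonneg z; omega
        · refine ⟨-q, ?_⟩
          have : n - (a:ℤ) - b = z % (M:ℤ) - z := by omega
          rw [this]; linarith
      have hru : (a, n - (a:ℤ)) = r n := uniq n (a, n - (a:ℤ)) ⟨ha, hbB', by ring⟩
      rw [← hru]
      dsimp only
      have he1 : n - (a:ℤ) - T = (b - T) - (M:ℤ) * q := by linarith
      rw [he1, hsubmul, hemod_eq (b - T) (by omega) (by omega)]
      simp only [Prod.mk.injEq]
      exact ⟨trivial, by omega⟩
    · -- right inverse
      intro n hn
      rw [Finset.mem_Ico] at hn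
      obtain ⟨ha, hbB, he⟩ := hr n
      have haD : ((r n).1 : ℤ) ≤ D := by exact_mod_cast hD _ ha
      obtain ⟨q, hq⟩ := hred ((r n).2 - T)
      dsimp only
      have he1 : ((r n).1 : ℤ) + (T + ((r n).2 - T) % (M:ℤ)) - (T + D)
          = (n - (T + D)) - (M:ℤ) * q := by linarith
      rw [he1, hsubmul, hemod_eq (n - (T+D)) (by omega) (by omega)]
      omega
    · -- weights
      rintro ⟨a, b⟩ hp
      dsimp only
      rw [← zpow_add₀ hζ0]
      refine hcong _ _ ?_
      obtain ⟨q, hq⟩ := hred ((a:ℤ) + b - (T + D))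
      exact ⟨q, by linarith⟩
  -- RHS vanishes for nontrivial roots of unity
  have geom : ∀ ζ : ℂ, ζ ^ (M:ℕ) = 1 → ζ ≠ 1 →
      ∑ n ∈ Finset.Ico (T + D) (T + D + (M:ℤ)), ζ ^ n = 0 := by
    intro ζ hζ hζ1
    have hζ0 : ζ ≠ 0 := by
      intro h; rw [h, zero_pow hM.ne'] at hζ; exact zero_ne_one hζ
    have h1 : ∑ n ∈ Finset.Ico (T + D) (T + D + (M:ℤ)), ζ ^ n
        = ∑ j ∈ Finset.range M, ζ ^ (T + D) * ζ ^ (j:ℕ) := by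
      refine Finset.sum_bij' (fun n _ => (n - (T+D)).toNat)
        (fun j _ => T + D + (j:ℤ)) ?_ ?_ ?_ ?_ ?_
      · intro n hn; rw [Finset.mem_Ico] at hn; rw [Finset.mem_range]; omega
      · intro j hj; rw [Finset.mem_range] at hj; rw [Finset.mem_Ico]; omega
      · intro n hn; rw [Finset.mem_Ico] at hn; omega
      · intro j hj; rw [Finset.mem_range] at hj; omega
      · intro n hn; rw [Finset.mem_Ico] at hn
        rw [← zpow_natCast ζ, ← zpow_add₀ hζ0]
        congr 1
        omega
    rw [h1, ← Finset.mul_sum, geom_sum_eq hζ1, hζ, sub_self, zero_div, mul_zero]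
  -- counting : N * |B0| = M
  have hIcard : (Finset.Ico (T + D) (T + D + (M:ℤ))).card = M := by
    rw [Int.card_Ico]
    omega
  have hcount : N * B0.card = M := by
    have h1 := key 1 (one_pow M)
    simp only [one_zpow, Finset.sum_const, nsmul_eq_mul, mul_one] at h1
    rw [hIcard] at h1
    rw [hN]
    exact_mod_cast h1
  -- Fourier contradiction
  by_contra hcon
  push_neg at hcon
  set μ : ℂ := Complex.exp (2 * Real.pi * Complex.I / M) with hμdef
  have hμ : IsPrimitiveRoot μ M := Complex.isPrimitiveRoot_exp M hM.ne'
  have hμ0 : μ ≠ 0 := by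
    intro h
    have := hμ.pow_eq_one
    rw [h, zero_pow hM.ne'] at this
    exact zero_ne_one this
  have hf0 : ∀ j ∈ Finset.range M, j ≠ 0 → ∑ b ∈ B0, (μ ^ j) ^ b = 0 := by
    intro j hj hj0
    rw [Finset.mem_range] at hj
    have hne1 : μ ^ j ≠ 1 := hμ.pow_ne_one_of_pos_of_lt hj0 hj
    have hpowM : (μ ^ j) ^ (M:ℕ) = 1 := by
      rw [← pow_mul, mul_comm, pow_mul, hμ.pow_eq_one, one_pow]
    have hA := hcon (μ ^ j) hne1 ⟨M, hM, hpowM⟩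
    have hk := key (μ ^ j) hpowM
    rw [geom (μ ^ j) hpowM hne1] at hk
    have hAz : ∑ a ∈ A, (μ ^ j) ^ (a:ℤ) = ∑ a ∈ A, (μ ^ j) ^ a :=
      Finset.sum_congr rfl fun a _ => zpow_natCast _ a
    rcases mul_eq_zero.mp hk with h | h
    · exact absurd (hAz.symm.trans h) hA
    · exact h
  have hS1 : ∑ j ∈ Finset.range M, ∑ b ∈ B0, (μ ^ j) ^ b = (B0.card : ℂ) := by
    rw [Finset.sum_eq_single_of_mem 0 (Finset.mem_range.mpr hM) hf0]
    simp
  have hS2 : ∑ j ∈ Finset.range M, ∑ b ∈ B0, (μ ^ j) ^ b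
      = ∑ b ∈ B0, ∑ j ∈ Finset.range M, (μ ^ (b:ℤ)) ^ (j:ℕ) := by
    rw [Finset.sum_comm]
    refine Finset.sum_congr rfl fun b hb => Finset.sum_congr rfl fun j hj => ?_
    rw [← zpow_natCast μ j, ← zpow_mul, mul_comm ((j:ℤ)) b, zpow_mul, zpow_natCast]
  have hinner : ∀ b ∈ B0, ∑ j ∈ Finset.range M, (μ ^ (b:ℤ)) ^ (j:ℕ)
      = if (M:ℤ) ∣ b then (M:ℂ) else 0 := by
    intro b hb
    by_cases hdvd : (M:ℤ) ∣ b
    · rw [if_pos hdvd]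
      have h1 : μ ^ (b:ℤ) = 1 := by
        obtain ⟨c, hc⟩ := hdvd
        have hMμ : μ ^ ((M:ℕ):ℤ) = 1 := by rw [zpow_natCast, hμ.pow_eq_one]
        rw [hc, zpow_mul, hMμ, one_zpow]
      rw [h1]
      simp
    · rw [if_neg hdvd]
      have hne1 : μ ^ (b:ℤ) ≠ 1 := fun h => hdvd ((hμ.zpow_eq_one_iff_dvd b).mp h)
      have hpowM : (μ ^ (b:ℤ)) ^ (M:ℕ) = 1 := by
        rw [← zpow_natCast, ← zpow_mul, mul_comm b ((M:ℤ)), zpow_mul,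
          zpow_natCast, hμ.pow_eq_one, one_zpow]
      rw [geom_sum_eq hne1, hpowM, sub_self, zero_div]
  have hS3 : (B0.card : ℂ) = ((B0.filter (fun b => (M:ℤ) ∣ b)).card : ℂ) * M := by
    rw [← hS1, hS2, Finset.sum_congr rfl hinner, ← Finset.sum_filter,
      Finset.sum_const, nsmul_eq_mul]
  have hnat : B0.card = (B0.filter (fun b => (M:ℤ) ∣ b)).card * M := by
    exact_mod_cast hS3
  rcases Nat.eq_zero_or_pos ((B0.filter (fun b => (M:ℤ) ∣ b)).card) with hk | hk
  · rw [hk, zero_mul] at hnat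
    rw [hnat, mul_zero] at hcount
    omega
  · have h1 : M ≤ B0.card := by
      calc M = 1 * M := (one_mul M).symm
      _ ≤ (B0.filter (fun b => (M:ℤ) ∣ b)).card * M := Nat.mul_le_mul_right M hk
      _ = B0.card := hnat.symm
    have h2 : 2 * M ≤ N * B0.card := Nat.mul_le_mul hN2 h1
    omega

theorem stmt15 (A : Finset ℕ) (h0A : 0 ∈ A) (N : ℕ) (hN : N = A.card) (hN2 : 2 ≤ N)
    (hirr : Irreducible (∑ a ∈ A, (X : Polynomial ℤ) ^ a))
    (htile : ∃ B : Set ℤ, ∀ n : ℤ, ∃! ab : ℕ × ℤ,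
      ab.1 ∈ A ∧ ab.2 ∈ B ∧ n = (ab.1 : ℤ) + ab.2) :
    N.Prime ∧ ∃ α : ℕ, 1 ≤ α ∧
      (∑ a ∈ A, (X : Polynomial ℤ) ^ a) = cyclotomic (N ^ α) ℤ ∧
      A = (Finset.range N).image (fun k => k * N ^ (α - 1)) := by
  classical
  obtain ⟨B, hB⟩ := htile
  obtain ⟨ζ, hζ1, ⟨M0, hM0, hζM0⟩, hζsum⟩ := tile_exists_root A h0A N hN hN2 B hB
  set P : ℤ[X] := ∑ a ∈ A, (X : ℤ[X]) ^ a with hP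
  have hcoeff : ∀ (S : Finset ℕ) (d : ℕ),
      (∑ a ∈ S, (X:ℤ[X])^a).coeff d = if d ∈ S then 1 else 0 := by
    intro S d
    rw [Polynomial.finset_sum_coeff]
    simp_rw [Polynomial.coeff_X_pow]
    exact Finset.sum_ite_eq S d fun _ => 1
  set D : ℕ := A.max' ⟨0, h0A⟩ with hDdef
  have hDA : D ∈ A := A.max'_mem _
  have hdegle : P.natDegree ≤ D :=
    Polynomial.natDegree_sum_le_of_forall_le A _ (fun a ha => by
      simpa [Polynomial.natDegree_X_pow] using A.le_max' a ha)
  have hcD : P.coeff D = 1 := by rw [hP, hcoeff]; simp [hDA]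
  have hdeg : P.natDegree = D :=
    le_antisymm hdegle (Polynomial.le_natDegree_of_ne_zero (by rw [hcD]; exact one_ne_zero))
  have hmonic : P.Monic := by
    rw [Polynomial.Monic, Polynomial.leadingCoeff, hdeg, hcD]
  have hfin : IsOfFinOrder ζ := isOfFinOrder_iff_pow_eq_one.mpr ⟨M0, hM0, hζM0⟩
  set s : ℕ := orderOf ζ with hs
  have hs0 : 0 < s := hfin.orderOf_pos
  have hs1 : s ≠ 1 := fun h => hζ1 (orderOf_eq_one_iff.mp h)
  have hprim : IsPrimitiveRoot ζ s := IsPrimitiveRoot.orderOf ζ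
  set Pq : ℚ[X] := P.map (Int.castRingHom ℚ) with hPq
  have hmonq : Pq.Monic := hmonic.map _
  have hirrq : Irreducible Pq :=
    (Polynomial.IsPrimitive.Int.irreducible_iff_irreducible_map_cast hmonic.isPrimitive).mp hirr
  have haev : (Polynomial.aeval ζ) Pq = 0 := by
    rw [hPq, show (Int.castRingHom ℚ) = algebraMap ℤ ℚ from rfl,
      Polynomial.aeval_map_algebraMap, hP]
    simp only [map_sum, Polynomial.aeval_X_pow]
    exact hζsum
  have hcycaev : (Polynomial.aeval ζ) (cyclotomic s ℚ) = 0 := by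
    have hroot := hprim.isRoot_cyclotomic hs0
    rw [Polynomial.aeval_def, Polynomial.eval₂_eq_eval_map, map_cyclotomic]
    exact hroot
  have heqq : Pq = cyclotomic s ℚ := by
    rw [minpoly.eq_of_irreducible_of_monic hirrq haev hmonq,
        minpoly.eq_of_irreducible_of_monic (Polynomial.cyclotomic.irreducible_rat hs0)
          hcycaev (cyclotomic.monic s ℚ)]
  have heqz : P = cyclotomic s ℤ := by
    apply Polynomial.map_injective (Int.castRingHom ℚ) Int.cast_injective
    rw [map_cyclotomic]
    exact heqq
  have hev1 : P.eval 1 = (N:ℤ) := by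
    rw [hP]
    simp [Polynomial.eval_finset_sum, hN]
  by_cases hpp : IsPrimePow s
  · obtain ⟨p, k, hp, hk, hpk⟩ := hpp
    have hpN : Nat.Prime p := Nat.prime_iff.mpr hp
    obtain ⟨k', rfl⟩ : ∃ k', k = k' + 1 := ⟨k - 1, by omega⟩
    haveI : Fact (Nat.Prime p) := ⟨hpN⟩
    have hevp : P.eval 1 = (p:ℤ) := by
      rw [heqz, ← hpk]
      exact Polynomial.eval_one_cyclotomic_prime_pow k'
    have hNp : N = p := by
      have := hev1.symm.trans hevp
      exact_mod_cast this
    subst hNp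
    refine ⟨hpN, k' + 1, le_add_self, ?_, ?_⟩
    · rw [heqz, ← hpk]
    · have hgeom : cyclotomic (N ^ (k'+1)) ℤ = ∑ i ∈ Finset.range N, (X ^ N ^ k') ^ i :=
        Polynomial.cyclotomic_prime_pow_eq_geom_sum hpN
      have hinj : Set.InjOn (fun j => j * N ^ k') (Finset.range N) := by
        intro i _ j _ h
        exact Nat.eq_of_mul_eq_mul_right (pow_pos hpN.pos k') h
      have himg : ∑ a ∈ (Finset.range N).image (fun j => j * N ^ k'), (X:ℤ[X]) ^ a
          = ∑ i ∈ Finset.range N, ((X:ℤ[X]) ^ N ^ k') ^ i := by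
        rw [Finset.sum_image hinj]
        refine Finset.sum_congr rfl fun i _ => ?_
        rw [← pow_mul, mul_comm]
      have hkey : P = ∑ a ∈ (Finset.range N).image (fun j => j * N ^ k'), (X:ℤ[X]) ^ a := by
        rw [heqz, ← hpk, hgeom, himg]
      have hPS : ∀ d : ℕ, (if d ∈ A then (1:ℤ) else 0)
          = if d ∈ (Finset.range N).image (fun j => j * N ^ k') then 1 else 0 := by
        intro d
        rw [← hcoeff A d, ← hcoeff _ d, ← hP, hkey]
      have hset : A = (Finset.range N).image (fun j => j * N ^ k') := by
        apply Finset.ext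
        intro d
        have h := hPS d
        constructor
        · intro hd
          by_contra hnd
          rw [if_pos hd, if_neg hnd] at h
          exact one_ne_zero h
        · intro hd
          by_contra hnd
          rw [if_neg hnd, if_pos hd] at h
          exact one_ne_zero h.symm
      simpa using hset
  · exfalso
    have hev1' : P.eval 1 = 1 := by
      rw [heqz]
      apply Polynomial.eval_one_cyclotomic_not_prime_pow
      intro p hp k hcontra
      rcases Nat.eq_zero_or_pos k with h0 | h0
      · rw [h0, pow_zero] at hcontra
        exact hs1 hcontra.symm
      · exact hpp ⟨p, k, hp.prime, h0, hcontra⟩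
    rw [hev1] at hev1'
    have : N = 1 := by exact_mod_cast hev1'
    omega
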